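/- Let f be a continuous transformation of a compact metric space (X,d) and μ an f-invariant Borel probability measure on X. If f is distance-expanding (there exist ε₀>0 and λ>1 such that d(f(x),f(y)) ≥ λ·d(x,y) whenever d(x,y)<ε₀) and open, then the inverse metric entropy of μ exists and h⁻_{f,B}(μ)=0. -/

import Mathlib

open MeasureTheory Filter Set

/-- The inverse limit (space of prehistories) of `(X, f)`. -/
def InvLim {X : Type*} (f : X → X) : Set (ℕ → X) :=
  {x | ∀ n, f (x (n + 1)) = x n}

/-- The induced shift map `f̂` on sequences. -/
def hatShift {X : Type*} (f : X → X) (x : ℕ → X) : ℕ → X :=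
  fun n => Nat.rec (f (x 0)) (fun k _ => x k) n

/-- The `(n, ε)`-inverse Bowen ball along the prehistory `xh`. -/
def invBowenBall {X : Type*} [PseudoMetricSpace X] (f : X → X) (xh : ℕ → X) (n : ℕ) (ε : ℝ) :
    Set X :=
  {y | ∃ yh ∈ InvLim f, yh 0 = y ∧ ∀ i ≤ n, dist (xh i) (yh i) < ε}

/-- Local lower inverse metric entropy `h⁻_{f,inf,B}(μ, xh)`. -/
noncomputable def hInvInfLoc {X : Type*} [PseudoMetricSpace X] [MeasurableSpace X]
    (f : X → X) (μ : Measure X) (xh : ℕ → X) : ℝ :=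
  ⨆ ε : {ε : ℝ // 0 < ε},
    Filter.liminf (fun n : ℕ => -Real.log ((μ (invBowenBall f xh n ε.1)).toReal) / n)
      Filter.atTop

/-- Local upper inverse metric entropy `h⁻_{f,sup,B}(μ, xh)`. -/
noncomputable def hInvSupLoc {X : Type*} [PseudoMetricSpace X] [MeasurableSpace X]
    (f : X → X) (μ : Measure X) (xh : ℕ → X) : ℝ :=
  ⨆ ε : {ε : ℝ // 0 < ε},
    Filter.limsup (fun n : ℕ => -Real.log ((μ (invBowenBall f xh n ε.1)).toReal) / n)
      Filter.atTop

/-- Recursive construction of a prehistory satisfying a predicate at each step. -/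
lemma exists_prehistory_aux {X : Type*} (f : X → X) (P : ℕ → X → Prop) (y : X) (h0 : P 0 y)
    (step : ∀ n w, P n w → ∃ w', f w' = w ∧ P (n + 1) w') :
    ∃ yh : ℕ → X, yh 0 = y ∧ (∀ n, f (yh (n + 1)) = yh n) ∧ ∀ n, P n (yh n) := by
  let g : (n : ℕ) → {w : X // P n w} := fun n =>
    Nat.rec ⟨y, h0⟩ (fun n p => ⟨(step n p.1 p.2).choose, (step n p.1 p.2).choose_spec.2⟩) n
  exact ⟨fun n => (g n).1, rfl, fun n => (step n (g n).1 (g n).2).choose_spec.1,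
    fun n => (g n).2⟩

/-- Uniform openness: an open continuous map on a compact metric space sends `r`-balls onto
sets containing uniform balls around the images of centers. -/
lemma uniform_open {X : Type*} [MetricSpace X] [CompactSpace X] {f : X → X}
    (hf : Continuous f) (hopen : IsOpenMap f) {r : ℝ} (hr : 0 < r) :
    ∃ a > 0, ∀ x : X, Metric.ball (f x) a ⊆ f '' Metric.ball x r := by
  rcases isEmpty_or_nonempty X with hX | hX
  · exact ⟨1, one_pos, fun x => (IsEmpty.false x).elim⟩
  have H : ∀ x : X, ∃ a > 0, Metric.ball (f x) a ⊆ f '' Metric.ball x (r / 2) := by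
    intro x
    have hop : IsOpen (f '' Metric.ball x (r / 2)) := hopen _ Metric.isOpen_ball
    exact Metric.isOpen_iff.1 hop (f x) ⟨x, Metric.mem_ball_self (by positivity), rfl⟩
  choose A hA hAsub using H
  have H2 : ∀ x : X, ∃ s > 0, s ≤ r / 2 ∧
      ∀ x', dist x' x < s → dist (f x') (f x) < A x / 2 := by
    intro x
    rcases Metric.continuous_iff.1 hf x (A x / 2) (by have := hA x; positivity) with ⟨s, hs, hcont⟩
    refine ⟨min s (r / 2), by positivity, min_le_right _ _, fun x' hx' => ?_⟩
    exact hcont x' (lt_of_lt_of_le hx' (min_le_left _ _))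
  choose S hS hSr hScont using H2
  obtain ⟨t, ht⟩ := isCompact_univ.elim_finite_subcover
    (fun x : X => Metric.ball x (S x)) (fun x => Metric.isOpen_ball)
    (fun x _ => Set.mem_iUnion.2 ⟨x, Metric.mem_ball_self (hS x)⟩)
  have htne : t.Nonempty := by
    obtain ⟨x⟩ := hX
    rcases Set.mem_iUnion.1 (ht (Set.mem_univ x)) with ⟨j, hj⟩
    rcases Set.mem_iUnion.1 hj with ⟨hjt, _⟩
    exact ⟨j, hjt⟩
  refine ⟨t.inf' htne (fun x => A x / 2), ?_, ?_⟩
  · apply (Finset.lt_inf'_iff htne).2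
    intro j _
    have := hA j; positivity
  · intro x z hz
    rcases Set.mem_iUnion.1 (ht (Set.mem_univ x)) with ⟨j, hj⟩
    rcases Set.mem_iUnion.1 hj with ⟨hjt, hxj⟩
    have hxj' : dist x j < S j := Metric.mem_ball.1 hxj
    have ha_le : t.inf' htne (fun x => A x / 2) ≤ A j / 2 := Finset.inf'_le _ hjt
    have h1 : dist (f x) (f j) < A j / 2 := hScont j x hxj'
    have h2 : dist z (f j) < A j := by
      calc dist z (f j) ≤ dist z (f x) + dist (f x) (f j) := dist_triangle _ _ _
        _ < A j / 2 + A j / 2 := by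
            have := Metric.mem_ball.1 hz
            exact add_lt_add (lt_of_lt_of_le this ha_le) h1
        _ = A j := by ring
    rcases hAsub j (Metric.mem_ball.2 h2) with ⟨w, hw, hfw⟩
    refine ⟨w, Metric.mem_ball.2 ?_, hfw⟩
    calc dist w x ≤ dist w j + dist j x := dist_triangle _ _ _
      _ < r / 2 + S j := add_lt_add (Metric.mem_ball.1 hw) (by rw [dist_comm]; exact hxj')
      _ ≤ r / 2 + r / 2 := by linarith [hSr j]
      _ = r := by ring

/-- If `f` is a continuous, distance-expanding, open map of a compact
metric space and `μ` is an `f`-invariant Borel probability measure, then the inverse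
metric entropy of `μ` exists and `h⁻_{f,B}(μ) = 0`: the integrals over the inverse limit
(against a lift `ν = μ̂` of `μ`) of both the lower and upper local inverse metric
entropies vanish. -/
theorem stmt2 {X : Type*} [MetricSpace X] [CompactSpace X]
    [MeasurableSpace X] [BorelSpace X]
    (f : X → X) (hf : Continuous f)
    (hexp : ∃ ε₀ > (0 : ℝ), ∃ lam > (1 : ℝ), ∀ x y : X,
      dist x y < ε₀ → lam * dist x y ≤ dist (f x) (f y))
    (hopen : IsOpenMap f)
    (μ : Measure X) [IsProbabilityMeasure μ] (hμ : MeasurePreserving f μ μ)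
    (ν : Measure (ℕ → X)) [IsProbabilityMeasure ν]
    (hν₁ : MeasurePreserving (hatShift f) ν ν)
    (hν₂ : ν.map (fun xh => xh 0) = μ)
    (hν₃ : ν (InvLim f) = 1) :
    (∫ xh, hInvInfLoc f μ xh ∂ν) = 0 ∧ (∫ xh, hInvSupLoc f μ xh ∂ν) = 0 := by
  obtain ⟨ε₀, hε₀, lam, hlam, hexp⟩ := hexp
  obtain ⟨a, ha, hsub⟩ := uniform_open hf hopen (by positivity : (0:ℝ) < ε₀ / 2)
  -- key geometric fact: balls are contained in inverse Bowen balls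
  have key : ∀ xh ∈ InvLim f, ∀ ε > (0:ℝ), ∀ n : ℕ,
      Metric.ball (xh 0) (min a ε) ⊆ invBowenBall f xh n ε := by
    intro xh hxh ε hε n y hy
    have h0 : dist y (xh 0) < min a ε := Metric.mem_ball.1 hy
    have hstep : ∀ i w, dist w (xh i) < min a ε →
        ∃ w', f w' = w ∧ dist w' (xh (i + 1)) < min a ε := by
      intro i w hw
      have hw' : w ∈ Metric.ball (f (xh (i + 1))) a := by
        rw [hxh i]
        exact Metric.mem_ball.2 (lt_of_lt_of_le hw (min_le_left _ _))
      rcases hsub (xh (i + 1)) hw' with ⟨w', hw'ball, hfw'⟩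
      refine ⟨w', hfw', ?_⟩
      have hd : dist w' (xh (i + 1)) < ε₀ := by
        have := Metric.mem_ball.1 hw'ball; linarith
      have hexp' : lam * dist w' (xh (i + 1)) ≤ dist (f w') (f (xh (i + 1))) := hexp _ _ hd
      rw [hfw', hxh i] at hexp'
      have h1 : dist w' (xh (i + 1)) ≤ lam * dist w' (xh (i + 1)) :=
        le_mul_of_one_le_left dist_nonneg (le_of_lt hlam)
      exact lt_of_le_of_lt (h1.trans hexp') hw
    obtain ⟨yh, hyh0, hchain, hP⟩ := exists_prehistory_aux f
      (fun i w => dist w (xh i) < min a ε) y h0 hstep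
    refine ⟨yh, hchain, hyh0, fun i _ => ?_⟩
    rw [dist_comm]
    exact lt_of_lt_of_le (hP i) (min_le_right _ _)
  -- the set of points all of whose balls have positive measure
  set T : Set X := {x | ∀ δ > (0:ℝ), μ (Metric.ball x δ) ≠ 0} with hT
  have hTc : μ Tᶜ = 0 := by
    apply measure_null_of_locally_null
    intro x hx
    simp only [hT, Set.mem_compl_iff, Set.mem_setOf_eq] at hx
    push_neg at hx
    obtain ⟨δ, hδ, hδ0⟩ := hx
    exact ⟨Metric.ball x δ, nhdsWithin_le_nhds (Metric.ball_mem_nhds x hδ), hδ0⟩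
  -- a.e. statement
  have hmeas0 : Measurable (fun xh : ℕ → X => xh 0) := measurable_pi_apply 0
  have hInv_meas : MeasurableSet (InvLim f) := by
    have : InvLim f = ⋂ n : ℕ, {x : ℕ → X | f (x (n + 1)) = x n} := by
      ext x; simp [InvLim, Set.mem_iInter]
    rw [this]
    refine MeasurableSet.iInter fun n => ?_
    have hcl : IsClosed {x : ℕ → X | f (x (n + 1)) = x n} :=
      isClosed_eq (hf.comp (continuous_apply (n + 1))) (continuous_apply n)
    exact hcl.measurableSet
  have hae : ∀ᵐ xh ∂ν, xh ∈ InvLim f ∧ xh 0 ∈ T := by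
    have h1 : ν (InvLim f)ᶜ = 0 := by
      rw [measure_compl hInv_meas (measure_ne_top ν _), hν₃, measure_univ, tsub_self]
    have h2 : ν ((fun xh : ℕ → X => xh 0) ⁻¹' Tᶜ) = 0 := by
      have := Measure.le_map_apply hmeas0.aemeasurable Tᶜ (μ := ν)
      rw [hν₂, hTc] at this
      exact le_antisymm this zero_le
    have : ν ({xh : ℕ → X | xh ∈ InvLim f ∧ xh 0 ∈ T})ᶜ = 0 := by
      apply measure_mono_null _ (measure_union_null h1 h2)
      intro xh hxh
      simp only [Set.mem_compl_iff, Set.mem_setOf_eq, not_and] at hxh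
      by_cases hInv : xh ∈ InvLim f
      · exact Or.inr (hxh hInv)
      · exact Or.inl hInv
    rw [MeasureTheory.ae_iff]
    exact this
  -- for each good point, the local entropies vanish
  have hzero : ∀ xh : ℕ → X, xh ∈ InvLim f → xh 0 ∈ T →
      hInvInfLoc f μ xh = 0 ∧ hInvSupLoc f μ xh = 0 := by
    intro xh hxh hT0
    have htend : ∀ ε : {ε : ℝ // 0 < ε},
        Tendsto (fun n : ℕ => -Real.log ((μ (invBowenBall f xh n ε.1)).toReal) / n)
          atTop (nhds 0) := by
      intro ⟨ε, hε⟩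
      set c : ENNReal := μ (Metric.ball (xh 0) (min a ε)) with hc
      have hc0 : c ≠ 0 := hT0 _ (lt_min ha hε)
      have hcR : 0 < c.toReal := ENNReal.toReal_pos hc0 (measure_ne_top μ _)
      set C : ℝ := -Real.log c.toReal with hC
      have hbound : ∀ n : ℕ,
          0 ≤ -Real.log ((μ (invBowenBall f xh n ε)).toReal) / n ∧
          -Real.log ((μ (invBowenBall f xh n ε)).toReal) / n ≤ C / n := by
        intro n
        set B := invBowenBall f xh n ε with hB
        have hle : c ≤ μ B := measure_mono (key xh hxh ε hε n)
        have hleR : c.toReal ≤ (μ B).toReal :=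
          ENNReal.toReal_le_toReal (measure_ne_top μ _) (measure_ne_top μ _) |>.2 hle
        have hB1 : (μ B).toReal ≤ 1 := by
          have := prob_le_one (μ := μ) (s := B)
          simpa using (ENNReal.toReal_le_toReal (measure_ne_top μ _) ENNReal.one_ne_top).2 this
        constructor
        · apply div_nonneg _ (Nat.cast_nonneg n)
          have : Real.log ((μ B).toReal) ≤ 0 :=
            Real.log_nonpos ENNReal.toReal_nonneg hB1
          linarith
        · rcases Nat.eq_zero_or_pos n with rfl | hn
          · simp
          · have hn' : (0:ℝ) < n := by exact_mod_cast hn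
            apply (div_le_div_iff_of_pos_right hn').2
            have : Real.log c.toReal ≤ Real.log ((μ B).toReal) :=
              Real.log_le_log hcR hleR
            simp only [hC]; linarith
      refine tendsto_of_tendsto_of_tendsto_of_le_of_le
        tendsto_const_nhds (tendsto_const_div_atTop_nhds_zero_nat C)
        (fun n => (hbound n).1) (fun n => (hbound n).2)
    haveI : Nonempty {ε : ℝ // 0 < ε} := ⟨⟨1, one_pos⟩⟩
    constructor
    · rw [hInvInfLoc]
      have : ∀ ε : {ε : ℝ // 0 < ε},
          Filter.liminf (fun n : ℕ => -Real.log ((μ (invBowenBall f xh n ε.1)).toReal) / n)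
            Filter.atTop = 0 := fun ε => (htend ε).liminf_eq
      simp only [this, ciSup_const]
    · rw [hInvSupLoc]
      have : ∀ ε : {ε : ℝ // 0 < ε},
          Filter.limsup (fun n : ℕ => -Real.log ((μ (invBowenBall f xh n ε.1)).toReal) / n)
            Filter.atTop = 0 := fun ε => (htend ε).limsup_eq
      simp only [this, ciSup_const]
  constructor
  · apply integral_eq_zero_of_ae
    filter_upwards [hae] with xh hxh
    exact (hzero xh hxh.1 hxh.2).1
  · apply integral_eq_zero_of_ae
    filter_upwards [hae] with xh hxh
    exact (hzero xh hxh.1 hxh.2).2
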